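/- Let N ≥ 2, let φ be twice continuously differentiable on a neighborhood of x₀ ∈ ℝ^N with ∇φ(x₀) ≠ 0. Then there exist δ > 0 and C > 0 such that for every x with |x − x₀| ≤ δ and every r ∈ (0, δ], |∫_{S^{N-1}} [1^+(φ(x + rω) − φ(x)) − 1^-(φ(x + rω) − φ(x))] dΣ(ω)| ≤ C r, where the integral is with respect to the surface measure on the unit sphere S^{N-1} ⊂ ℝ^N and 1^+ and 1^- are the indicators of [0,∞) and (−∞,0). -/

import Mathlib

open MeasureTheory Filter Metric Set
open scoped Topology RealInnerProductSpace ENNReal NNReal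

noncomputable section

abbrev Euc (n : ℕ) : Type := EuclideanSpace ℝ (Fin n)

/-- `sign`: `1` if positive, `-1` otherwise. -/
def thSign (s : ℝ) : ℝ := if 0 < s then 1 else -1

/-- `1^+ - 1^-`: `1` if `0 ≤ s`, `-1` otherwise. -/
def sgnGe (s : ℝ) : ℝ := if 0 ≤ s then 1 else -1

/-- `1_+ - 1_-`: `1` if `0 < s`, `-1` otherwise. -/
def sgnGt (s : ℝ) : ℝ := if 0 < s then 1 else -1

/-- indicator of `[0,∞)`. -/
def indPlus (s : ℝ) : ℝ := if 0 ≤ s then 1 else 0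

/-- The embedding `ℝ^{n-1} → ℝ^n`, `y' ↦ (0, y')`. -/
def pad (d : ℕ) (y' : Euc (d+1)) : Euc (d+2) :=
  (EuclideanSpace.equiv (Fin (d+2)) ℝ).symm
    (Fin.cons 0 (EuclideanSpace.equiv (Fin (d+1)) ℝ y'))

/-- the surface area of the unit sphere of `ℝ^m`. -/
def sphereArea (m : ℕ) : ℝ := 2 * Real.pi ^ ((m : ℝ)/2) / Real.Gamma ((m : ℝ)/2)

/-- the initial datum `1_{Ω₀} - 1_{(closure Ω₀)ᶜ}`. -/
def isSgnInitial (n : ℕ) (Ω₀ : Set (Euc n)) (v : Euc n → ℝ) : Prop :=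
  ∀ x, v x = Ω₀.indicator (fun _ => (1:ℝ)) x - ((closure Ω₀)ᶜ).indicator (fun _ => (1:ℝ)) x

/-- `U h k` is the threshold dynamics iterate at time step `k` with parameter `h`:
`u_h(⬝, (k+1)h) = sign (p(⬝, σ(h)) * u_h(⬝, kh))`. -/
def IsThresholdDynamics (n : ℕ) (p : Euc n → ℝ → ℝ) (σ : ℝ → ℝ) (Ω₀ : Set (Euc n))
    (U : ℝ → ℕ → Euc n → ℝ) : Prop :=
  ∀ h : ℝ, 0 < h → isSgnInitial n Ω₀ (U h 0) ∧
    ∀ (k : ℕ) (x : Euc n), U h (k+1) x = thSign (∫ y, p (x - y) (σ h) * U h k y)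

/-- `limsup* U (x,t)`, the upper half-relaxed limit as `h → 0⁺`, `y → x`, `kh → t`. -/
def limsupStar (n : ℕ) (U : ℝ → ℕ → Euc n → ℝ) (x : Euc n) (t : ℝ) : ℝ :=
  sInf {S : ℝ | ∃ ε : ℝ, 0 < ε ∧ S = sSup {v : ℝ | ∃ (h : ℝ) (k : ℕ) (y : Euc n),
    0 < h ∧ h < ε ∧ dist y x < ε ∧ |(k : ℝ) * h - t| < ε ∧ v = U h k y}}

/-- `liminf_* U (x,t)`, the lower half-relaxed limit as `h → 0⁺`, `y → x`, `kh → t`. -/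
def liminfStar (n : ℕ) (U : ℝ → ℕ → Euc n → ℝ) (x : Euc n) (t : ℝ) : ℝ :=
  sSup {S : ℝ | ∃ ε : ℝ, 0 < ε ∧ S = sInf {v : ℝ | ∃ (h : ℝ) (k : ℕ) (y : Euc n),
    0 < h ∧ h < ε ∧ dist y x < ε ∧ |(k : ℝ) * h - t| < ε ∧ v = U h k y}}

/-- a `C²` test function on `ℝ^n × (0,∞)`. -/
def IsC2Test (n : ℕ) (φ : Euc n → ℝ → ℝ) : Prop :=
  ContDiffOn ℝ 2 (fun q : Euc n × ℝ => φ q.1 q.2) (Set.univ ×ˢ Set.Ioi 0)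

/-- the spatial gradient `∇φ(x,t)`. -/
def spaceGrad (n : ℕ) (φ : Euc n → ℝ → ℝ) (x : Euc n) (t : ℝ) : Euc n :=
  gradient (fun y => φ y t) x

/-- the time derivative `φ_t(x,t)`. -/
def timeDeriv (n : ℕ) (φ : Euc n → ℝ → ℝ) (x : Euc n) (t : ℝ) : ℝ :=
  deriv (fun s => φ x s) t

/-- the spatial Hessian `D²φ(x,t)`. -/
def spaceHess (n : ℕ) (φ : Euc n → ℝ → ℝ) (x : Euc n) (t : ℝ) : Euc n →L[ℝ] Euc n :=
  fderiv ℝ (fun y => spaceGrad n φ y t) x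

/-- local boundedness of a space-time function. -/
def LocBounded (n : ℕ) (w : Euc n → ℝ → ℝ) : Prop :=
  ∀ K : Set (Euc n × ℝ), IsCompact K → ∃ M, ∀ q ∈ K, |w q.1 q.2| ≤ M

/-- `C tr((I - p̂ ⊗ p̂) D²φ)(x,t)` with `p̂ = ∇φ/|∇φ|`. -/
def mcfRHS (n : ℕ) (C : ℝ) (φ : Euc n → ℝ → ℝ) (x : Euc n) (t : ℝ) : ℝ :=
  C * (LinearMap.trace ℝ (Euc n) (spaceHess n φ x t : Euc n →ₗ[ℝ] Euc n) -
    @inner ℝ _ _ (spaceHess n φ x t (‖spaceGrad n φ x t‖⁻¹ • spaceGrad n φ x t))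
      (‖spaceGrad n φ x t‖⁻¹ • spaceGrad n φ x t))

/-- viscosity subsolution of `w_t = C tr((I - D̂w ⊗ D̂w) D²w)`. -/
def IsMCFSubsolution (n : ℕ) (C : ℝ) (w : Euc n → ℝ → ℝ) : Prop :=
  UpperSemicontinuousOn (fun q : Euc n × ℝ => w q.1 q.2) (Set.univ ×ˢ Set.Ioi 0) ∧
  LocBounded n w ∧
  ∀ φ : Euc n → ℝ → ℝ, IsC2Test n φ → ∀ (x : Euc n) (t : ℝ), 0 < t →
    (∀ y s, 0 < s → w y s - φ y s ≤ w x t - φ x t) →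
    (spaceGrad n φ x t ≠ 0 → timeDeriv n φ x t ≤ mcfRHS n C φ x t) ∧
    (spaceGrad n φ x t = 0 → spaceHess n φ x t = 0 → timeDeriv n φ x t ≤ 0)

/-- viscosity supersolution of `w_t = C tr((I - D̂w ⊗ D̂w) D²w)`. -/
def IsMCFSupersolution (n : ℕ) (C : ℝ) (w : Euc n → ℝ → ℝ) : Prop :=
  LowerSemicontinuousOn (fun q : Euc n × ℝ => w q.1 q.2) (Set.univ ×ˢ Set.Ioi 0) ∧
  LocBounded n w ∧
  ∀ φ : Euc n → ℝ → ℝ, IsC2Test n φ → ∀ (x : Euc n) (t : ℝ), 0 < t →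
    (∀ y s, 0 < s → w x t - φ x t ≤ w y s - φ y s) →
    (spaceGrad n φ x t ≠ 0 → mcfRHS n C φ x t ≤ timeDeriv n φ x t) ∧
    (spaceGrad n φ x t = 0 → spaceHess n φ x t = 0 → 0 ≤ timeDeriv n φ x t)

/-- the nonlocal operator `Ī_A[v]` (at a fixed time). -/
def Ibar (n : ℕ) (α : ℝ) (A : Set (Euc n)) (v : Euc n → ℝ) (x : Euc n) : ℝ :=
  ∫ y in A, sgnGe (v (x + y) - v x) * ‖y‖ ^ (-((n : ℝ) + α))

/-- the nonlocal operator `I̲_A[v]` (at a fixed time). -/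
def Iunder (n : ℕ) (α : ℝ) (A : Set (Euc n)) (v : Euc n → ℝ) (x : Euc n) : ℝ :=
  ∫ y in A, sgnGt (v (x + y) - v x) * ‖y‖ ^ (-((n : ℝ) + α))

/-- viscosity subsolution of the nonlocal equation `w_t = C |Dw| Ī[w]`. -/
def IsNLSubsolution (n : ℕ) (α C : ℝ) (w : Euc n → ℝ → ℝ) : Prop :=
  UpperSemicontinuousOn (fun q : Euc n × ℝ => w q.1 q.2) (Set.univ ×ˢ Set.Ioi 0) ∧
  LocBounded n w ∧
  ∀ φ : Euc n → ℝ → ℝ, IsC2Test n φ → ∀ (x : Euc n) (t : ℝ), 0 < t →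
    (∀ y s, 0 < s → w y s - φ y s ≤ w x t - φ x t) →
    ∀ δ : ℝ, 0 < δ →
      timeDeriv n φ x t ≤ C * ‖spaceGrad n φ x t‖ *
        (Ibar n α (Metric.ball 0 δ) (fun y => φ y t) x +
          Ibar n α (Metric.ball 0 δ)ᶜ (fun y => w y t) x)

/-- viscosity supersolution of the nonlocal equation `w_t = C |Dw| Ī[w]`. -/
def IsNLSupersolution (n : ℕ) (α C : ℝ) (w : Euc n → ℝ → ℝ) : Prop :=
  LowerSemicontinuousOn (fun q : Euc n × ℝ => w q.1 q.2) (Set.univ ×ˢ Set.Ioi 0) ∧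
  LocBounded n w ∧
  ∀ φ : Euc n → ℝ → ℝ, IsC2Test n φ → ∀ (x : Euc n) (t : ℝ), 0 < t →
    (∀ y s, 0 < s → w x t - φ x t ≤ w y s - φ y s) →
    ∀ δ : ℝ, 0 < δ →
      C * ‖spaceGrad n φ x t‖ *
        (Iunder n α (Metric.ball 0 δ) (fun y => φ y t) x +
          Ibar n α (Metric.ball 0 δ)ᶜ (fun y => w y t) x) ≤ timeDeriv n φ x t

/-- A kernel `P` of fractional order `α`: positive, bounded, continuous, radially symmetric,
of total mass one, with decay `P(x) ≤ C₀(1+|x|^{N+α})⁻¹` and such that, with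
`p(x,t) = t^{-N/α}P(t^{-1/α}x)`, `t⁻¹ p(⬝,t) → c_α |⬝|^{-(N+α)}` as `t → 0⁺`, locally
uniformly away from the origin and in `L¹` outside every ball around the origin. -/
structure FracKernel (n : ℕ) (α : ℝ) where
  P : Euc n → ℝ
  cα : ℝ
  cα_pos : 0 < cα
  P_pos : ∀ x, 0 < P x
  P_bdd : ∃ M, ∀ x, P x ≤ M
  P_cont : Continuous P
  P_radial : ∀ x y : Euc n, ‖x‖ = ‖y‖ → P x = P y
  P_int : ∫ x, P x = 1
  P_decay : ∃ C₀ : ℝ, 0 < C₀ ∧ ∀ x, P x ≤ C₀ * (1 + ‖x‖ ^ ((n : ℝ) + α))⁻¹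
  loc_unif : ∀ K : Set (Euc n), IsCompact K → (0 : Euc n) ∉ K →
    TendstoUniformlyOn
      (fun (t : ℝ) (x : Euc n) => t⁻¹ * (t ^ (-(n : ℝ)/α) * P ((t ^ (-α⁻¹ : ℝ)) • x)))
      (fun x => cα * ‖x‖ ^ (-((n : ℝ) + α))) (nhdsWithin 0 (Set.Ioi 0)) K
  L1_conv : ∀ r : ℝ, 0 < r →
    Tendsto (fun t : ℝ => ∫ x in {x : Euc n | r ≤ ‖x‖},
        |t⁻¹ * (t ^ (-(n : ℝ)/α) * P ((t ^ (-α⁻¹ : ℝ)) • x)) - cα * ‖x‖ ^ (-((n : ℝ) + α))|)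
      (nhdsWithin 0 (Set.Ioi 0)) (nhds 0)

/-- the scaled kernel `p(x,t) = t^{-N/α} P(t^{-1/α} x)`. -/
def FracKernel.p {n : ℕ} {α : ℝ} (K : FracKernel n α) (x : Euc n) (t : ℝ) : ℝ :=
  t ^ (-(n : ℝ)/α) * K.P ((t ^ (-α⁻¹ : ℝ)) • x)

/-- the constant `C_α = c_α (2∫_{ℝ^{N-1}} P(0,y') dy')⁻¹`. -/
def fracC (d : ℕ) (α : ℝ) (K : FracKernel (d+2) α) : ℝ :=
  K.cα * (2 * ∫ y' : Euc (d+1), K.P (pad d y'))⁻¹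

/-- the constant `C_α = (∫_{ℝ^{N-1}} (y'_1)² P(0,y') dy') (2∫_{ℝ^{N-1}} P(0,y') dy')⁻¹`. -/
def mcfC (d : ℕ) (α : ℝ) (K : FracKernel (d+2) α) : ℝ :=
  (∫ y' : Euc (d+1), (y' 0)^2 * K.P (pad d y')) *
    (2 * ∫ y' : Euc (d+1), K.P (pad d y'))⁻¹

/-- the Poisson kernel `p(x,t) = c_N t (t² + |x|²)^{-(N+1)/2}`. -/
def poissonp (n : ℕ) (x : Euc n) (t : ℝ) : ℝ :=
  (Real.Gamma (((n : ℝ) + 1)/2) * Real.pi ^ (-(((n : ℝ) + 1)/2))) * t *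
    (t^2 + ‖x‖^2) ^ (-(((n : ℝ) + 1)/2))

/-- the constant `C₁ = ω_{N-1} (2 ∫_{ℝ^{N-1}} (1+|y'|²)^{-(N+1)/2} dy')⁻¹`. -/
def poissonC1 (d : ℕ) : ℝ :=
  sphereArea (d+1) *
    (2 * ∫ y' : Euc (d+1), ((1 : ℝ) + ‖y'‖^2) ^ (-(((d : ℝ) + 3)/2)))⁻¹

/-- the no-interior condition for the evolving front. -/
def NoInterior (n : ℕ) (u : Euc n → ℝ → ℝ) : Prop :=
  (⋃ t ∈ Set.Ioi (0:ℝ), (fun x => (x, t)) '' {x : Euc n | u x t = 0}) =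
      frontier {q : Euc n × ℝ | 0 < q.2 ∧ 0 < u q.1 q.2} ∩ {q : Euc n × ℝ | 0 < q.2} ∧
  (⋃ t ∈ Set.Ioi (0:ℝ), (fun x => (x, t)) '' {x : Euc n | u x t = 0}) =
      frontier {q : Euc n × ℝ | 0 < q.2 ∧ u q.1 q.2 < 0} ∩ {q : Euc n × ℝ | 0 < q.2}

/-- the upper semicontinuous envelope in the space variable. -/
def uscEnvSpace (n : ℕ) (v : Euc n → ℝ) (x : Euc n) : ℝ :=
  sInf {S : ℝ | ∃ ε : ℝ, 0 < ε ∧ S = sSup {w : ℝ | ∃ y : Euc n, dist y x < ε ∧ w = v y}}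

/-- the upper semicontinuous envelope on `ℝ^n × [0,∞)`. -/
def uscEnvST (n : ℕ) (w : Euc n → ℝ → ℝ) (x : Euc n) (t : ℝ) : ℝ :=
  sInf {S : ℝ | ∃ ε : ℝ, 0 < ε ∧ S = sSup {v : ℝ | ∃ (y : Euc n) (s : ℝ),
    0 ≤ s ∧ dist y x < ε ∧ |s - t| < ε ∧ v = w y s}}

/-- the lower semicontinuous envelope on `ℝ^n × [0,∞)`. -/
def lscEnvST (n : ℕ) (w : Euc n → ℝ → ℝ) (x : Euc n) (t : ℝ) : ℝ :=
  sSup {S : ℝ | ∃ ε : ℝ, 0 < ε ∧ S = sInf {v : ℝ | ∃ (y : Euc n) (s : ℝ),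
    0 ≤ s ∧ dist y x < ε ∧ |s - t| < ε ∧ v = w y s}}

open scoped Pointwise in
private lemma slab_vol (d : ℕ) (ν : Euc (d+2)) (hν : ‖ν‖ = 1) (ε : ℝ) (hε : 0 ≤ ε) :
    volume {y : Euc (d+2) | ‖y‖ ≤ 1 ∧ |⟪ν, y⟫| ≤ ε} ≤ ENNReal.ofReal (2^(d+2) * ε) := by
  -- orthonormal basis with b 0 = ν
  have hcard : Module.finrank ℝ (Euc (d+2)) = Fintype.card (Fin (d+2)) := by
    simp [finrank_euclideanSpace_fin]
  have horth : Orthonormal ℝ (Set.restrict ({0} : Set (Fin (d+2))) (fun _ => ν)) := by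
    constructor
    · intro i; exact hν
    · intro i j hij
      exact absurd (Subtype.ext (by
        have hi := i.2; have hj := j.2
        simp only [Set.mem_singleton_iff] at hi hj
        rw [hi, hj])) hij
  obtain ⟨b, hb⟩ := horth.exists_orthonormalBasis_extension_of_card_eq hcard
  have hb0 : b 0 = ν := hb 0 rfl
  set Spi : Set (Fin (d+2) → ℝ) :=
    Set.univ.pi (fun i => if i = 0 then Icc (-ε) ε else Icc (-1) 1) with hSpi
  have hSpimeas : MeasurableSet Spi := by
    apply MeasurableSet.univ_pi
    intro i
    split <;> exact measurableSet_Icc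
  have hsub : {y : Euc (d+2) | ‖y‖ ≤ 1 ∧ |⟪ν, y⟫| ≤ ε} ⊆
      b.repr ⁻¹' ((MeasurableEquiv.toLp 2 (Fin (d+2) → ℝ)).symm ⁻¹' Spi) := by
    rintro y ⟨hy1, hy2⟩
    intro i _
    have hcoord : (MeasurableEquiv.toLp 2 (Fin (d+2) → ℝ)).symm (b.repr y) i = ⟪b i, y⟫ := by
      simp [b.repr_apply_apply]
    rw [hcoord]
    by_cases hi : i = 0
    · subst hi
      simp only [if_pos rfl]
      rw [hb0]
      exact abs_le.mp hy2
    · simp only [if_neg hi]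
      refine abs_le.mp ?_
      calc |⟪b i, y⟫| ≤ ‖b i‖ * ‖y‖ := abs_real_inner_le_norm _ _
        _ ≤ 1 * 1 := by
            apply mul_le_mul _ hy1 (norm_nonneg _) zero_le_one
            simp [b.orthonormal.1 i]
        _ = 1 := one_mul 1
  calc volume {y : Euc (d+2) | ‖y‖ ≤ 1 ∧ |⟪ν, y⟫| ≤ ε}
      ≤ volume (b.repr ⁻¹' ((MeasurableEquiv.toLp 2 (Fin (d+2) → ℝ)).symm ⁻¹' Spi)) :=
        measure_mono hsub
    _ = volume ((MeasurableEquiv.toLp 2 (Fin (d+2) → ℝ)).symm ⁻¹' Spi) :=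
        b.measurePreserving_repr.measure_preimage
          ((hSpimeas.preimage (MeasurableEquiv.toLp 2 (Fin (d+2) → ℝ)).symm.measurable).nullMeasurableSet)
    _ = volume Spi :=
        (EuclideanSpace.volume_preserving_symm_measurableEquiv_toLp (Fin (d+2))).measure_preimage
          hSpimeas.nullMeasurableSet
    _ = ∏ i : Fin (d+2), volume (if i = 0 then Icc (-ε) ε else Icc (-1:ℝ) 1) := volume_pi_pi _
    _ ≤ ENNReal.ofReal (2^(d+2) * ε) := by
        have : ∀ i : Fin (d+2), volume (if i = 0 then Icc (-ε) ε else Icc (-1:ℝ) 1) =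
            if i = 0 then ENNReal.ofReal (2*ε) else ENNReal.ofReal 2 := by
          intro i; split <;> simp [Real.volume_Icc] <;> ring_nf <;> rw [ENNReal.ofReal_mul hε, ENNReal.ofReal_ofNat]
        simp_rw [this]
        rw [← Finset.mul_prod_erase Finset.univ _ (Finset.mem_univ (0 : Fin (d+2)))]
        have h2 : ∀ i ∈ Finset.univ.erase (0 : Fin (d+2)),
            (if i = 0 then ENNReal.ofReal (2*ε) else ENNReal.ofReal 2) = ENNReal.ofReal 2 := by
          intro i hi
          rw [if_neg (Finset.ne_of_mem_erase hi)]
        rw [Finset.prod_congr rfl h2, Finset.prod_const, if_pos rfl,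
          Finset.card_erase_of_mem (Finset.mem_univ _)]
        simp only [Finset.card_univ, Fintype.card_fin]
        rw [← ENNReal.ofReal_pow (by norm_num : (0:ℝ) ≤ 2), ← ENNReal.ofReal_mul (by positivity)]
        apply ENNReal.ofReal_le_ofReal
        rw [show d + 2 - 1 = d + 1 from rfl]
        ring_nf
        nlinarith [pow_nonneg (by norm_num : (0:ℝ) ≤ 2) d, hε]

open scoped Pointwise in
private lemma sphere_slab (d : ℕ) (ν : Euc (d+2)) (hν : ‖ν‖ = 1) (ε : ℝ) (hε : 0 ≤ ε) :
    (volume : Measure (Euc (d+2))).toSphere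
      {ω : Metric.sphere (0 : Euc (d+2)) 1 | |⟪ν, (ω : Euc (d+2))⟫| ≤ ε} ≤
    ENNReal.ofReal ((d+2) * 2^(d+2) * ε) := by
  set s : Set (Metric.sphere (0 : Euc (d+2)) 1) :=
    {ω | |⟪ν, (ω : Euc (d+2))⟫| ≤ ε} with hs
  have hcont : Continuous (fun ω : Metric.sphere (0 : Euc (d+2)) 1 => |⟪ν, (ω : Euc (d+2))⟫|) :=
    (continuous_const.inner continuous_subtype_val).abs
  have hmeas : MeasurableSet s := measurableSet_le hcont.measurable measurable_const
  rw [Measure.toSphere_apply' _ hmeas]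
  have hsub : (Ioo (0:ℝ) 1) • (Subtype.val '' s) ⊆
      {y : Euc (d+2) | ‖y‖ ≤ 1 ∧ |⟪ν, y⟫| ≤ ε} := by
    rintro y hy
    rw [Set.mem_smul] at hy
    obtain ⟨t, ht, z, hz, rfl⟩ := hy
    obtain ⟨ω, hω, rfl⟩ := hz
    have hωn : ‖(ω : Euc (d+2))‖ = 1 := by
      have := ω.2; simpa [mem_sphere_iff_norm] using this
    constructor
    · rw [norm_smul, hωn, mul_one, Real.norm_eq_abs, abs_of_pos ht.1]
      exact ht.2.le
    · rw [real_inner_smul_right, abs_mul, abs_of_pos ht.1]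
      calc t * |⟪ν, (ω : Euc (d+2))⟫| ≤ 1 * ε := by
            apply mul_le_mul ht.2.le hω (abs_nonneg _) zero_le_one
        _ = ε := one_mul ε
  calc (Module.finrank ℝ (Euc (d+2)) : ℝ≥0∞) * volume ((Ioo (0:ℝ) 1) • (Subtype.val '' s))
      ≤ (d+2 : ℕ) * ENNReal.ofReal (2^(d+2) * ε) := by
        rw [finrank_euclideanSpace_fin]
        exact mul_le_mul_right ((measure_mono hsub).trans (slab_vol d ν hν ε hε)) _
    _ ≤ ENNReal.ofReal ((d+2) * 2^(d+2) * ε) := by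
        rw [← ENNReal.ofReal_natCast (d+2), ← ENNReal.ofReal_mul (by positivity)]
        apply ENNReal.ofReal_le_ofReal
        push_cast
        ring_nf
        exact le_rfl

private lemma equator_zero (d : ℕ) (u : Euc (d+2)) (hu : u ≠ 0) :
    (volume : Measure (Euc (d+2))).toSphere
      {ω : Metric.sphere (0 : Euc (d+2)) 1 | ⟪u, (ω : Euc (d+2))⟫ = 0} = 0 := by
  set ν : Euc (d+2) := ‖u‖⁻¹ • u with hν
  have hνn : ‖ν‖ = 1 := by
    rw [hν, norm_smul, norm_inv, norm_norm, inv_mul_cancel₀ (norm_ne_zero_iff.2 hu)]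
  have key : ∀ ε : ℝ, 0 < ε →
      (volume : Measure (Euc (d+2))).toSphere
        {ω : Metric.sphere (0 : Euc (d+2)) 1 | ⟪u, (ω : Euc (d+2))⟫ = 0} ≤
      ENNReal.ofReal ((d+2) * 2^(d+2) * ε) := by
    intro ε hε
    refine le_trans (measure_mono ?_) (sphere_slab d ν hνn ε hε.le)
    intro ω hω
    simp only [Set.mem_setOf_eq] at hω ⊢
    rw [hν, real_inner_smul_left, hω, mul_zero, abs_zero]
    exact hε.le
  by_contra h
  have hpos : 0 < (volume : Measure (Euc (d+2))).toSphere
      {ω : Metric.sphere (0 : Euc (d+2)) 1 | ⟪u, (ω : Euc (d+2))⟫ = 0} := pos_iff_ne_zero.2 h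
  have hlim : Tendsto (fun ε : ℝ => ENNReal.ofReal ((d+2) * 2^(d+2) * ε)) (𝓝[>] 0)
      (𝓝 0) := by
    rw [show (0:ℝ≥0∞) = ENNReal.ofReal ((d+2) * 2^(d+2) * 0) by simp]
    apply Tendsto.mono_left _ nhdsWithin_le_nhds
    exact (ENNReal.continuous_ofReal.tendsto _).comp (tendsto_const_nhds.mul tendsto_id)
  have := ge_of_tendsto hlim (eventually_nhdsWithin_of_forall (fun ε hε => key ε hε))
  exact absurd (le_antisymm this zero_le) h

open scoped Pointwise in
private lemma symm_integral_zero (d : ℕ) (u : Euc (d+2)) (hu : u ≠ 0) :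
    ∫ ω : Metric.sphere (0 : Euc (d+2)) 1, sgnGe ⟪u, (ω : Euc (d+2))⟫
      ∂((volume : Measure (Euc (d+2))).toSphere) = 0 := by
  set Sg := (volume : Measure (Euc (d+2))).toSphere with hSg
  set A : Set (Metric.sphere (0 : Euc (d+2)) 1) := {ω | 0 < ⟪u, (ω : Euc (d+2))⟫} with hA
  set B : Set (Metric.sphere (0 : Euc (d+2)) 1) := {ω | ⟪u, (ω : Euc (d+2))⟫ < 0} with hB
  have hcont : Continuous (fun ω : Metric.sphere (0 : Euc (d+2)) 1 => ⟪u, (ω : Euc (d+2))⟫) :=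
    continuous_const.inner continuous_subtype_val
  have hAm : MeasurableSet A := measurableSet_lt measurable_const hcont.measurable
  have hBm : MeasurableSet B := measurableSet_lt hcont.measurable measurable_const
  -- A and B have equal measure, via negation
  have hAB : Sg A = Sg B := by
    rw [hSg, Measure.toSphere_apply' _ hAm, Measure.toSphere_apply' _ hBm]
    congr 1
    have himg : Subtype.val '' A = -(Subtype.val '' B) := by
      ext y
      simp only [Set.mem_image, Set.mem_neg, hA, hB, Set.mem_setOf_eq]
      constructor
      · rintro ⟨ω, hω, rfl⟩
        refine ⟨⟨-(ω : Euc (d+2)), by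
          rw [mem_sphere_zero_iff_norm, norm_neg]
          exact mem_sphere_zero_iff_norm.mp ω.2⟩, ?_, rfl⟩
        simpa using hω
      · rintro ⟨ω, hω, hωy⟩
        refine ⟨⟨-(ω : Euc (d+2)), by
          rw [mem_sphere_zero_iff_norm, norm_neg]
          exact mem_sphere_zero_iff_norm.mp ω.2⟩, ?_, ?_⟩
        · simpa using hω
        · simp only [Subtype.coe_mk]
          rw [hωy, neg_neg]
    have hsmul : Ioo (0:ℝ) 1 • (Subtype.val '' A) = -(Ioo (0:ℝ) 1 • (Subtype.val '' B)) := by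
      rw [himg, Set.smul_neg]
    rw [hsmul]
    have h1 : -(Ioo (0:ℝ) 1 • (Subtype.val '' B)) = ((-1:ℝ)) • (Ioo (0:ℝ) 1 • (Subtype.val '' B)) := by
      ext y
      simp only [Set.mem_neg, Set.mem_smul_set]
      constructor
      · intro h; exact ⟨-y, h, by simp⟩
      · rintro ⟨z, hz, rfl⟩; simpa using hz
    rw [h1, Measure.addHaar_smul]
    simp
  -- decompose the integrand
  have hfun : (fun ω : Metric.sphere (0 : Euc (d+2)) 1 => sgnGe ⟪u, (ω : Euc (d+2))⟫) =
      fun ω => Set.indicator Bᶜ (fun _ => (1:ℝ)) ω + Set.indicator B (fun _ => (-1:ℝ)) ω := by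
    funext ω
    by_cases h : ω ∈ B
    · have h' : ¬ (0 ≤ ⟪u, (ω : Euc (d+2))⟫) := not_le.2 h
      rw [sgnGe, if_neg h', Set.indicator_of_mem h,
        Set.indicator_of_notMem (Set.notMem_compl_iff.2 h)]
      norm_num
    · have h' : 0 ≤ ⟪u, (ω : Euc (d+2))⟫ := not_lt.1 h
      rw [sgnGe, if_pos h', Set.indicator_of_mem (Set.mem_compl h), Set.indicator_of_notMem h]
      norm_num
  rw [hfun, integral_add ((integrable_const (1:ℝ)).indicator hBm.compl)
    ((integrable_const (-1:ℝ)).indicator hBm),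
    integral_indicator_const _ hBm.compl, integral_indicator_const _ hBm]
  -- Sg Bᶜ = Sg A
  have hBc : Sg Bᶜ = Sg A := by
    have : (Bᶜ : Set (Metric.sphere (0 : Euc (d+2)) 1)) =
        A ∪ {ω | ⟪u, (ω : Euc (d+2))⟫ = 0} := by
      ext ω
      simp only [Set.mem_compl_iff, hA, hB, Set.mem_setOf_eq, Set.mem_union, not_lt]
      constructor
      · intro h; rcases lt_or_eq_of_le h with h' | h'
        · exact Or.inl h'
        · exact Or.inr h'.symm
      · rintro (h | h)
        · exact h.le
        · exact h.ge
    rw [this]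
    refine le_antisymm ?_ (measure_mono Set.subset_union_left)
    calc Sg (A ∪ {ω | ⟪u, (ω : Euc (d+2))⟫ = 0})
        ≤ Sg A + Sg {ω | ⟪u, (ω : Euc (d+2))⟫ = 0} := measure_union_le _ _
      _ = Sg A := by rw [hSg, equator_zero d u hu, add_zero]
  rw [measureReal_def, measureReal_def, hBc, hAB]
  simp

private lemma abs_sgnGe (s : ℝ) : |sgnGe s| = 1 := by
  rw [sgnGe]; split <;> norm_num

set_option maxHeartbeats 1000000 in
/-- The spherical balance estimate: near a point where `∇φ ≠ 0`, the signed spherical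
average of `1^+ - 1^-` of `φ(x + rω) - φ(x)` is `O(r)`. -/
theorem spherical_balance_estimate
    (d : ℕ) (x₀ : Euc (d+2)) (φ : Euc (d+2) → ℝ)
    (V : Set (Euc (d+2))) (hV : V ∈ nhds x₀) (hφ : ContDiffOn ℝ 2 φ V)
    (hgrad : gradient φ x₀ ≠ 0) :
    ∃ δ : ℝ, 0 < δ ∧ ∃ C : ℝ, 0 < C ∧
      ∀ x : Euc (d+2), dist x x₀ ≤ δ → ∀ r : ℝ, 0 < r → r ≤ δ →
        |∫ ω : Metric.sphere (0 : Euc (d+2)) 1,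
            sgnGe (φ (x + r • (ω : Euc (d+2))) - φ x)
          ∂((volume : Measure (Euc (d+2))).toSphere)| ≤ C * r := by
  obtain ⟨U, hUV, hU, hx₀U⟩ := _root_.mem_nhds_iff.mp hV
  have hφU : ContDiffOn ℝ 2 φ U := hφ.mono hUV
  have hdiff : ∀ y ∈ U, DifferentiableAt ℝ φ y := fun y hy =>
    (hφU.differentiableOn (by norm_num)).differentiableAt (hU.mem_nhds hy)
  have hfd : ContDiffOn ℝ 1 (fderiv ℝ φ) U := by
    have h2 : ContDiffOn ℝ ((1:ℕ) + 1) φ U := by exact_mod_cast hφU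
    exact ((contDiffOn_succ_iff_fderiv_of_isOpen hU).mp h2).2.2
  obtain ⟨K, t, ht, hlip⟩ := (hfd.contDiffAt (hU.mem_nhds hx₀U)).exists_lipschitzOnWith
  have hfx₀ : fderiv ℝ φ x₀ ≠ 0 := by
    intro h
    apply hgrad
    rw [gradient, h, map_zero]
  set m : ℝ := ‖fderiv ℝ φ x₀‖ / 2 with hm
  have hmpos : 0 < m := by
    have := norm_pos_iff.mpr hfx₀
    positivity
  obtain ⟨ρ, hρpos, hρ⟩ : ∃ ρ > 0, closedBall x₀ ρ ⊆ t ∩ U := by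
    rcases Metric.mem_nhds_iff.mp (inter_mem ht (hU.mem_nhds hx₀U)) with ⟨ε, hε, hball⟩
    exact ⟨ε/2, by positivity, (closedBall_subset_ball (by linarith)).trans hball⟩
  set δ : ℝ := min (ρ/3) (m/((K:ℝ)+1)) with hδ
  have hδpos : 0 < δ := by
    apply lt_min (by positivity)
    positivity
  refine ⟨δ, hδpos, 2 * ((d+2) * 2^(d+2)) * ((K:ℝ)/m) + 1, by positivity, ?_⟩
  intro x hx r hr hrδ
  -- basic memberships
  have hxρ : x ∈ closedBall x₀ ρ := by
    rw [mem_closedBall]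
    calc dist x x₀ ≤ δ := hx
      _ ≤ ρ/3 := min_le_left _ _
      _ ≤ ρ := by linarith
  have hxt : x ∈ t := (hρ hxρ).1
  have hxU : x ∈ U := (hρ hxρ).2
  -- gradient lower bound at x
  have hnormx : m ≤ ‖fderiv ℝ φ x‖ := by
    have hd : dist (fderiv ℝ φ x) (fderiv ℝ φ x₀) ≤ (K:ℝ) * dist x x₀ :=
      hlip.dist_le_mul x hxt x₀ (mem_of_mem_nhds ht)
    have h1 : (K:ℝ) * dist x x₀ ≤ m := by
      calc (K:ℝ) * dist x x₀ ≤ (K:ℝ) * (m/((K:ℝ)+1)) := by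
            apply mul_le_mul_of_nonneg_left (hx.trans (min_le_right _ _)) K.coe_nonneg
        _ ≤ m := by
            rw [mul_div_assoc']
            rw [div_le_iff₀ (by positivity)]
            nlinarith [K.coe_nonneg, hmpos]
    have h2 : ‖fderiv ℝ φ x₀‖ - ‖fderiv ℝ φ x - fderiv ℝ φ x₀‖ ≤ ‖fderiv ℝ φ x‖ := by
      have := norm_sub_norm_le (fderiv ℝ φ x) (fderiv ℝ φ x₀)
      linarith [abs_le.mp (abs_norm_sub_norm_le (fderiv ℝ φ x) (fderiv ℝ φ x₀))]
    rw [dist_eq_norm] at hd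
    have : ‖fderiv ℝ φ x - fderiv ℝ φ x₀‖ ≤ m := hd.trans h1
    calc m = 2*m - m := by ring
      _ ≤ ‖fderiv ℝ φ x₀‖ - ‖fderiv ℝ φ x - fderiv ℝ φ x₀‖ := by
          rw [hm]; ring_nf; linarith [this]
      _ ≤ ‖fderiv ℝ φ x‖ := h2
  -- Taylor estimate
  have taylor : ∀ ω : Euc (d+2), ‖ω‖ = 1 →
      |φ (x + r • ω) - φ x - fderiv ℝ φ x (r • ω)| ≤ (K:ℝ) * r^2 := by
    intro ω hω
    set s : Set (Euc (d+2)) := closedBall x r with hs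
    have hst : s ⊆ t ∩ U := by
      intro y hy
      apply hρ
      rw [mem_closedBall] at hy ⊢
      calc dist y x₀ ≤ dist y x + dist x x₀ := dist_triangle _ _ _
        _ ≤ r + δ := add_le_add hy hx
        _ ≤ δ + δ := by linarith
        _ ≤ ρ/3 + ρ/3 := by have := min_le_left (ρ/3) (m/((K:ℝ)+1)); linarith [hδpos]
        _ ≤ ρ := by linarith
    set g : Euc (d+2) → ℝ := fun y => φ y - fderiv ℝ φ x y with hg
    have hderiv : ∀ y ∈ s, HasFDerivWithinAt g (fderiv ℝ φ y - fderiv ℝ φ x) s y := by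
      intro y hy
      exact (((hdiff y (hst hy).2).hasFDerivAt).sub ((fderiv ℝ φ x).hasFDerivAt)).hasFDerivWithinAt
    have hbound : ∀ y ∈ s, ‖fderiv ℝ φ y - fderiv ℝ φ x‖ ≤ (K:ℝ) * r := by
      intro y hy
      have := hlip.dist_le_mul y (hst hy).1 x hxt
      rw [dist_eq_norm] at this
      refine this.trans ?_
      exact mul_le_mul_of_nonneg_left (by rwa [mem_closedBall] at hy) K.coe_nonneg
    have hxs : x ∈ s := mem_closedBall_self hr.le
    have hxrs : x + r • ω ∈ s := by
      rw [hs, mem_closedBall, dist_eq_norm, add_sub_cancel_left, norm_smul, hω,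
        Real.norm_eq_abs, abs_of_pos hr, mul_one]
    have key := (convex_closedBall x r).norm_image_sub_le_of_norm_hasFDerivWithin_le
      hderiv hbound hxrs hxs
    rw [hg] at key
    simp only [add_sub_cancel_left] at key
    have hnorm : ‖x + r • ω - x‖ = r := by
      rw [add_sub_cancel_left, norm_smul, hω, Real.norm_eq_abs, abs_of_pos hr, mul_one]
    rw [norm_sub_rev x (x + r • ω), hnorm] at key
    have heq : φ x - fderiv ℝ φ x x - (φ (x + r • ω) - fderiv ℝ φ x (x + r • ω)) =
        -(φ (x + r • ω) - φ x - fderiv ℝ φ x (r • ω)) := by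
      have : fderiv ℝ φ x (x + r • ω) = fderiv ℝ φ x x + fderiv ℝ φ x (r • ω) :=
        (fderiv ℝ φ x).map_add x (r • ω)
      rw [this]; ring
    rw [Real.norm_eq_abs, heq, abs_neg] at key
    calc |φ (x + r • ω) - φ x - fderiv ℝ φ x (r • ω)| ≤ (K:ℝ) * r * r := key
      _ = (K:ℝ) * r^2 := by ring
  -- gradient at x
  set u : Euc (d+2) := gradient φ x with hu
  have hnormu : ‖u‖ = ‖fderiv ℝ φ x‖ := by
    rw [hu, gradient]
    exact LinearIsometryEquiv.norm_map _ _
  have humpos : m ≤ ‖u‖ := by rw [hnormu]; exact hnormx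
  have hu0 : u ≠ 0 := by
    intro h; rw [h, norm_zero] at humpos; linarith
  have hinner : ∀ w : Euc (d+2), ⟪u, w⟫ = fderiv ℝ φ x w := fun w => by
    rw [hu, gradient]
    exact InnerProductSpace.toDual_symm_apply
  set ν : Euc (d+2) := ‖u‖⁻¹ • u with hν
  have hνn : ‖ν‖ = 1 := by
    rw [hν, norm_smul, norm_inv, norm_norm, inv_mul_cancel₀ (norm_ne_zero_iff.2 hu0)]
  set ε : ℝ := ((K:ℝ)/m) * r with hε
  have hεnn : 0 ≤ ε := by positivity
  set slab : Set (Metric.sphere (0 : Euc (d+2)) 1) := {ω | |⟪ν, (ω : Euc (d+2))⟫| ≤ ε}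
    with hslab
  have hslabm : MeasurableSet slab :=
    measurableSet_le ((continuous_const.inner continuous_subtype_val).abs.measurable)
      measurable_const
  set F : Metric.sphere (0 : Euc (d+2)) 1 → ℝ :=
    fun ω => sgnGe (φ (x + r • (ω : Euc (d+2))) - φ x) with hF
  set G : Metric.sphere (0 : Euc (d+2)) 1 → ℝ :=
    fun ω => sgnGe ⟪u, (ω : Euc (d+2))⟫ with hG
  -- continuity / measurability
  have hmap : ∀ ω : Metric.sphere (0 : Euc (d+2)) 1, x + r • (ω : Euc (d+2)) ∈ U := by
    intro ω
    have hωn : ‖(ω : Euc (d+2))‖ = 1 := mem_sphere_zero_iff_norm.mp ω.2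
    refine (hρ ?_).2
    rw [mem_closedBall]
    calc dist (x + r • (ω : Euc (d+2))) x₀
        ≤ dist (x + r • (ω : Euc (d+2))) x + dist x x₀ := dist_triangle _ _ _
      _ ≤ r + δ := by
          apply add_le_add _ hx
          rw [dist_eq_norm, add_sub_cancel_left, norm_smul, hωn, Real.norm_eq_abs,
            abs_of_pos hr, mul_one]
      _ ≤ δ + δ := by linarith
      _ ≤ ρ/3 + ρ/3 := by have := min_le_left (ρ/3) (m/((K:ℝ)+1)); linarith
      _ ≤ ρ := by linarith
  have hhcont : Continuous (fun ω : Metric.sphere (0 : Euc (d+2)) 1 =>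
      φ (x + r • (ω : Euc (d+2))) - φ x) := by
    apply Continuous.sub _ continuous_const
    exact (hφU.continuousOn.comp_continuous
      (continuous_const.add (continuous_subtype_val.const_smul r)) hmap)
  have hFm : Measurable F := by
    apply Measurable.ite _ measurable_const measurable_const
    exact measurableSet_le measurable_const hhcont.measurable
  have hGm : Measurable G := by
    apply Measurable.ite _ measurable_const measurable_const
    exact measurableSet_le measurable_const
      ((continuous_const.inner continuous_subtype_val)).measurable
  have hFint : Integrable F ((volume : Measure (Euc (d+2))).toSphere) := by
    refine Integrable.mono' (integrable_const 1) hFm.aestronglyMeasurable ?_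
    filter_upwards with ω
    rw [hF, Real.norm_eq_abs, abs_sgnGe]
  have hGint : Integrable G ((volume : Measure (Euc (d+2))).toSphere) := by
    refine Integrable.mono' (integrable_const 1) hGm.aestronglyMeasurable ?_
    filter_upwards with ω
    rw [hG, Real.norm_eq_abs, abs_sgnGe]
  -- pointwise bound
  have hFG : ∀ ω : Metric.sphere (0 : Euc (d+2)) 1,
      |F ω - G ω| ≤ Set.indicator slab (fun _ => (2:ℝ)) ω := by
    intro ω
    by_cases hω : ω ∈ slab
    · rw [Set.indicator_of_mem hω]
      calc |F ω - G ω| ≤ |F ω| + |G ω| := abs_sub _ _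
        _ = 2 := by rw [hF, hG, abs_sgnGe, abs_sgnGe]; norm_num
    · rw [Set.indicator_of_notMem hω]
      have hωn : ‖(ω : Euc (d+2))‖ = 1 := mem_sphere_zero_iff_norm.mp ω.2
      set L : ℝ := fderiv ℝ φ x (ω : Euc (d+2)) with hL
      have hLinner : ⟪u, (ω : Euc (d+2))⟫ = L := hinner _
      have hslabgt : ε < |⟪ν, (ω : Euc (d+2))⟫| := by
        rw [hslab] at hω
        exact not_le.mp hω
      have hupos : 0 < ‖u‖ := lt_of_lt_of_le hmpos humpos
      have hνinner : ⟪ν, (ω : Euc (d+2))⟫ = ‖u‖⁻¹ * L := by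
        rw [hν, real_inner_smul_left, hLinner]
      have hKrL : (K:ℝ) * r < |L| := by
        have h1 : |⟪ν, (ω : Euc (d+2))⟫| = ‖u‖⁻¹ * |L| := by
          rw [hνinner, abs_mul, abs_of_nonneg (inv_nonneg.2 hupos.le)]
        rw [h1] at hslabgt
        have h2 : ‖u‖ * ε < |L| := by
          calc ‖u‖ * ε < ‖u‖ * (‖u‖⁻¹ * |L|) := mul_lt_mul_of_pos_left hslabgt hupos
            _ = |L| := by field_simp
        have h3 : (K:ℝ) * r ≤ ‖u‖ * ε := by
          rw [hε]
          calc (K:ℝ) * r = m * ((K:ℝ)/m) * r := by field_simp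
            _ ≤ ‖u‖ * ((K:ℝ)/m) * r := by
                apply mul_le_mul_of_nonneg_right
                  (mul_le_mul_of_nonneg_right humpos (by positivity)) hr.le
            _ = ‖u‖ * (((K:ℝ)/m) * r) := by ring
        linarith
      have htay := taylor (ω : Euc (d+2)) hωn
      have hfds : fderiv ℝ φ x (r • (ω : Euc (d+2))) = r * L := by
        rw [ContinuousLinearMap.map_smul, smul_eq_mul]
      rw [hfds] at htay
      have heq : F ω = G ω := by
        rw [hF, hG]
        show sgnGe (φ (x + r • (ω : Euc (d+2))) - φ x) = sgnGe ⟪u, (ω : Euc (d+2))⟫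
        rw [hLinner]
        by_cases hLpos : 0 < L
        · have hLgt : (K:ℝ) * r < L := by rwa [abs_of_pos hLpos] at hKrL
          have hΔ : 0 < φ (x + r • (ω : Euc (d+2))) - φ x := by
            have h5 := (abs_le.mp htay).1
            have h4 : r * ((K:ℝ)*r) < r * L := mul_lt_mul_of_pos_left hLgt hr
            nlinarith [h5, h4]
          rw [sgnGe, sgnGe, if_pos hΔ.le, if_pos hLpos.le]
        · have hL0 : L ≤ 0 := not_lt.mp hLpos
          have hLlt : L < -((K:ℝ) * r) := by
            rw [abs_of_nonpos hL0] at hKrL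
            linarith
          have hΔ : φ (x + r • (ω : Euc (d+2))) - φ x < 0 := by
            have h5 := (abs_le.mp htay).2
            have h4 : r * L < r * (-((K:ℝ)*r)) := mul_lt_mul_of_pos_left hLlt hr
            nlinarith [h5, h4]
          have hLneg : L < 0 := by
            have : (0:ℝ) ≤ (K:ℝ) * r := by positivity
            linarith
          rw [sgnGe, sgnGe, if_neg (not_le.mpr hΔ), if_neg (not_le.mpr hLneg)]
      rw [heq, sub_self, abs_zero]
  -- assemble
  have hGzero : ∫ ω : Metric.sphere (0 : Euc (d+2)) 1, G ω
      ∂((volume : Measure (Euc (d+2))).toSphere) = 0 := symm_integral_zero d u hu0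
  have hslabvol : ((volume : Measure (Euc (d+2))).toSphere slab).toReal ≤
      (d+2) * 2^(d+2) * ε := by
    apply ENNReal.toReal_le_of_le_ofReal (by positivity)
    exact sphere_slab d ν hνn ε hεnn
  have hind : Integrable (Set.indicator slab (fun _ => (2:ℝ)))
      ((volume : Measure (Euc (d+2))).toSphere) := (integrable_const (2:ℝ)).indicator hslabm
  calc |∫ ω : Metric.sphere (0 : Euc (d+2)) 1, F ω
        ∂((volume : Measure (Euc (d+2))).toSphere)|
      = |∫ ω, (F ω - G ω) ∂((volume : Measure (Euc (d+2))).toSphere)| := by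
        rw [integral_sub hFint hGint, hGzero, sub_zero]
    _ ≤ ∫ ω, |F ω - G ω| ∂((volume : Measure (Euc (d+2))).toSphere) := by
        have h := norm_integral_le_integral_norm (μ := (volume : Measure (Euc (d+2))).toSphere)
          (fun ω => F ω - G ω)
        simpa [Real.norm_eq_abs] using h
    _ ≤ ∫ ω, Set.indicator slab (fun _ => (2:ℝ)) ω
        ∂((volume : Measure (Euc (d+2))).toSphere) := by
        apply integral_mono (hFint.sub hGint).abs hind hFG
    _ = ((volume : Measure (Euc (d+2))).toSphere slab).toReal • (2:ℝ) :=
        integral_indicator_const _ hslabm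
    _ ≤ ((d+2) * 2^(d+2) * ε) * 2 := by
        rw [smul_eq_mul]
        apply mul_le_mul_of_nonneg_right hslabvol (by norm_num)
    _ ≤ (2 * ((d+2) * 2^(d+2)) * ((K:ℝ)/m) + 1) * r := by
        rw [hε]
        have hp : (0:ℝ) < (d+2) * 2^(d+2) := by positivity
        nlinarith [hr, K.coe_nonneg, hmpos.le]

end
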